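/- For a single agent with monotonic valuation u on subsets of M with |M| = m, the number of subsets A ⊆ M such that both A and M \ A are EF1 for u is at least C(m, m/2) for m even and at least 2·C(m−1, (m−1)/2) for m odd. -/

import Mathlib

open Finset Classical

/-- Bundle `A` is EF1 for valuation `u` (items `M`). -/
def EF1 {α : Type*} [DecidableEq α] (M : Finset α) (u : Finset α → ℝ) (A : Finset α) : Prop :=
  u (M \ A) ≤ u A ∨ ∃ j ∈ M \ A, u ((M \ A).erase j) ≤ u A

/-- Bundle `A` is EFX for valuation `u` (items `M`). -/
def EFX {α : Type*} [DecidableEq α] (M : Finset α) (u : Finset α → ℝ) (A : Finset α) : Prop :=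
  ∀ j ∈ M \ A, u ((M \ A).erase j) ≤ u A

namespace EFCount

open Finset UV
open scoped FinsetFamily

abbrev Fam := Finset (Finset ℕ)

def Inter2 (𝒜 : Fam) : Prop := ∀ X ∈ 𝒜, ∀ Y ∈ 𝒜, 2 ≤ #(X ∩ Y)

lemma compress_singleton {i j : ℕ} (hij : i ≠ j) {B : Finset ℕ} (hi : i ∉ B) (hj : j ∈ B) :
    compress ({i} : Finset ℕ) {j} B = insert i (B.erase j) := by
  rw [compress_of_disjoint_of_le (by simpa using hi) (by simpa using hj)]
  ext a
  simp only [mem_sdiff, mem_union, mem_insert, mem_erase, mem_singleton, sup_eq_union]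
  constructor
  · rintro ⟨h1 | h1, h2⟩
    · exact Or.inr ⟨h2, h1⟩
    · exact Or.inl h1
  · rintro (rfl | ⟨h1, h2⟩)
    · exact ⟨Or.inr rfl, hij⟩
    · exact ⟨Or.inl h2, h1⟩

lemma mem_compression_cases {i j : ℕ} {𝒜 : Fam} {X : Finset ℕ} (hX : X ∈ 𝓒 {i} {j} 𝒜) :
    (X ∈ 𝒜 ∧ compress ({i} : Finset ℕ) {j} X ∈ 𝒜) ∨
      (X ∉ 𝒜 ∧ ∃ B ∈ 𝒜, i ∉ B ∧ j ∈ B ∧ X = insert i (B.erase j)) := by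
  rw [UV.mem_compression] at hX
  rcases hX with ⟨h1, h2⟩ | ⟨h1, B, hB, hBX⟩
  · exact Or.inl ⟨h1, h2⟩
  · right
    refine ⟨h1, B, hB, ?_⟩
    by_cases hc : Disjoint ({i} : Finset ℕ) B ∧ ({j} : Finset ℕ) ≤ B
    · have hi : i ∉ B := by simpa using hc.1
      have hj : j ∈ B := by simpa using hc.2
      have hij : i ≠ j := fun h => hi (h ▸ hj)
      exact ⟨hi, hj, by rw [← hBX, compress_singleton hij hi hj]⟩
    · rw [compress, if_neg hc] at hBX
      exact absurd (hBX ▸ hB) h1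

lemma two_le_card_inter_new_old {i j : ℕ} (hij : i ≠ j) {𝒜 : Fam} (h : Inter2 𝒜)
    {B Y : Finset ℕ} (hB : B ∈ 𝒜) (hiB : i ∉ B) (hjB : j ∈ B) (hY : Y ∈ 𝒜)
    (hcY : compress ({i} : Finset ℕ) {j} Y ∈ 𝒜) :
    2 ≤ #((insert i (B.erase j)) ∩ Y) := by
  by_cases hjY : j ∈ Y
  · by_cases hiY : i ∈ Y
    · -- insert i ((B ∩ Y).erase j) ⊆ X ∩ Y
      have hsub : insert i ((B ∩ Y).erase j) ⊆ (insert i (B.erase j)) ∩ Y := by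
        intro a ha
        rcases mem_insert.1 ha with rfl | ha
        · exact mem_inter.2 ⟨mem_insert_self _ _, hiY⟩
        · have h' := mem_erase.1 ha
          obtain ⟨haj, haB, haY⟩ : a ≠ j ∧ a ∈ B ∧ a ∈ Y :=
            ⟨h'.1, (mem_inter.1 h'.2).1, (mem_inter.1 h'.2).2⟩
          exact mem_inter.2 ⟨mem_insert_of_mem (mem_erase.2 ⟨haj, haB⟩), haY⟩
      refine le_trans ?_ (card_le_card hsub)
      have hiB' : i ∉ (B ∩ Y).erase j := fun hmem => hiB (mem_inter.1 (mem_erase.1 hmem).2).1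
      rw [card_insert_of_notMem hiB', card_erase_of_mem (mem_inter.2 ⟨hjB, hjY⟩)]
      have := h B hB Y hY
      omega
    · -- i ∉ Y, j ∈ Y: use compressed Y
      have hY' : insert i (Y.erase j) ∈ 𝒜 := by
        rwa [compress_singleton hij hiY hjY] at hcY
      have hBY' := h B hB _ hY'
      have hkey : B ∩ insert i (Y.erase j) = (B ∩ Y).erase j := by
        ext a
        simp only [mem_inter, mem_insert, mem_erase]
        constructor
        · rintro ⟨haB, rfl | ⟨haj, haY⟩⟩
          · exact absurd haB hiB
          · exact ⟨haj, haB, haY⟩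
        · rintro ⟨haj, haB, haY⟩
          exact ⟨haB, Or.inr ⟨haj, haY⟩⟩
      rw [hkey] at hBY'
      have hsub : (B ∩ Y).erase j ⊆ (insert i (B.erase j)) ∩ Y := by
        intro a ha
        have h' := mem_erase.1 ha
        obtain ⟨haj, haB, haY⟩ : a ≠ j ∧ a ∈ B ∧ a ∈ Y :=
          ⟨h'.1, (mem_inter.1 h'.2).1, (mem_inter.1 h'.2).2⟩
        exact mem_inter.2 ⟨mem_insert_of_mem (mem_erase.2 ⟨haj, haB⟩), haY⟩
      exact le_trans hBY' (card_le_card hsub)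
  · -- j ∉ Y
    have hsub : B ∩ Y ⊆ (insert i (B.erase j)) ∩ Y := by
      intro a ha
      obtain ⟨haB, haY⟩ := mem_inter.1 ha
      have haj : a ≠ j := fun h => hjY (h ▸ haY)
      exact mem_inter.2 ⟨mem_insert_of_mem (mem_erase.2 ⟨haj, haB⟩), haY⟩
    exact le_trans (h B hB Y hY) (card_le_card hsub)

lemma Inter2.compression {i j : ℕ} (hij : i ≠ j) {𝒜 : Fam} (h : Inter2 𝒜) :
    Inter2 (𝓒 {i} {j} 𝒜) := by
  intro X hX Y hY
  rcases mem_compression_cases hX with ⟨hXA, hcX⟩ | ⟨hXn, B, hB, hiB, hjB, rfl⟩ <;>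
    rcases mem_compression_cases hY with ⟨hYA, hcY⟩ | ⟨hYn, C, hC, hiC, hjC, rfl⟩
  · exact h _ hXA _ hYA
  · rw [inter_comm]
    exact two_le_card_inter_new_old hij h hC hiC hjC hXA hcX
  · exact two_le_card_inter_new_old hij h hB hiB hjB hYA hcY
  · -- both new
    have hsub : insert i ((B ∩ C).erase j) ⊆ (insert i (B.erase j)) ∩ (insert i (C.erase j)) := by
      intro a ha
      rcases mem_insert.1 ha with rfl | ha
      · exact mem_inter.2 ⟨mem_insert_self _ _, mem_insert_self _ _⟩
      · have h' := mem_erase.1 ha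
        obtain ⟨haj, haB, haC⟩ : a ≠ j ∧ a ∈ B ∧ a ∈ C :=
          ⟨h'.1, (mem_inter.1 h'.2).1, (mem_inter.1 h'.2).2⟩
        exact mem_inter.2 ⟨mem_insert_of_mem (mem_erase.2 ⟨haj, haB⟩),
          mem_insert_of_mem (mem_erase.2 ⟨haj, haC⟩)⟩
    refine le_trans ?_ (card_le_card hsub)
    have hiBC : i ∉ (B ∩ C).erase j := fun hmem => hiB (mem_inter.1 (mem_erase.1 hmem).2).1
    rw [card_insert_of_notMem hiBC, card_erase_of_mem (mem_inter.2 ⟨hjB, hjC⟩)]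
    have := h B hB C hC
    omega

def famMeasure (𝒜 : Fam) : ℕ := ∑ A ∈ 𝒜, ∑ a ∈ A, a

lemma famMeasure_compression_lt (hij : i < j) (hne : 𝓒 {i} {j} 𝒜 ≠ 𝒜) :
    famMeasure (𝓒 {i} {j} 𝒜) < famMeasure 𝒜 := by
  rw [UV.compression] at hne ⊢
  have q : ∀ Q ∈ {A ∈ 𝒜 | compress ({i} : Finset ℕ) {j} A ∉ 𝒜},
      compress ({i} : Finset ℕ) {j} Q ≠ Q := by
    simp_rw [mem_filter]
    intro Q hQ h
    rw [h] at hQ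
    exact hQ.2 hQ.1
  have uA : {A ∈ 𝒜 | compress ({i} : Finset ℕ) {j} A ∈ 𝒜} ∪
      {A ∈ 𝒜 | compress ({i} : Finset ℕ) {j} A ∉ 𝒜} = 𝒜 := filter_union_filter_not_eq _ _
  have ne₂ : {A ∈ 𝒜 | compress ({i} : Finset ℕ) {j} A ∉ 𝒜}.Nonempty := by
    refine nonempty_iff_ne_empty.2 fun z => hne ?_
    rw [filter_image, z, image_empty, union_empty]
    rwa [z, union_empty] at uA
  rw [famMeasure, famMeasure, sum_union compress_disjoint]
  conv_rhs => rw [← uA]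
  rw [sum_union (disjoint_filter_filter_not _ _ _), add_lt_add_iff_left, filter_image,
    sum_image compress_injOn]
  refine sum_lt_sum_of_nonempty ne₂ fun A hA => ?_
  have hQ := q A hA
  have hA' : A ∈ 𝒜 := (mem_filter.1 hA).1
  -- compress A ≠ A means the condition held
  by_cases hc : Disjoint ({i} : Finset ℕ) A ∧ ({j} : Finset ℕ) ≤ A
  · have hiA : i ∉ A := by simpa using hc.1
    have hjA : j ∈ A := by simpa using hc.2
    rw [compress_singleton hij.ne hiA hjA]
    have hiA' : i ∉ A.erase j := fun h => hiA (mem_of_mem_erase h)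
    rw [sum_insert hiA']
    have hsum : j + ∑ a ∈ A.erase j, a = ∑ a ∈ A, a :=
      add_sum_erase A (fun a => a) hjA
    omega
  · rw [compress, if_neg hc] at hQ
    exact absurd rfl hQ

def Shifted (𝒜 : Fam) : Prop := ∀ i j : ℕ, i < j → IsCompressed {i} {j} 𝒜

lemma shift_mem (hs : Shifted 𝒜) {A : Finset ℕ} (hA : A ∈ 𝒜)
    (hij : i < j) (hi : i ∉ A) (hj : j ∈ A) : insert i (A.erase j) ∈ 𝒜 := by
  have h := compress_mem_compression (s := 𝒜) (u := ({i} : Finset ℕ)) (v := {j}) hA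
  rwa [hs i j hij, compress_singleton hij.ne hi hj] at h

lemma exists_shifted {n r : ℕ} (𝒜 : Fam) (hg : ∀ A ∈ 𝒜, A ⊆ range n)
    (hs : ∀ A ∈ 𝒜, #A = r) (h2 : Inter2 𝒜) :
    ∃ ℬ : Fam, #ℬ = #𝒜 ∧ #(∂ ℬ) ≤ #(∂ 𝒜) ∧ (∀ A ∈ ℬ, A ⊆ range n) ∧
      (∀ A ∈ ℬ, #A = r) ∧ Inter2 ℬ ∧ Shifted ℬ := by
  by_cases hsh : Shifted 𝒜
  · exact ⟨𝒜, rfl, le_rfl, hg, hs, h2, hsh⟩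
  · simp only [Shifted, not_forall] at hsh
    obtain ⟨i, j, hij, hnc⟩ := hsh
    have hne : 𝓒 {i} {j} 𝒜 ≠ 𝒜 := hnc
    have hlt := famMeasure_compression_lt hij hne
    have hg' : ∀ A ∈ 𝓒 {i} {j} 𝒜, A ⊆ range n := by
      intro A hA
      rcases mem_compression_cases hA with ⟨hA, -⟩ | ⟨-, B, hB, hiB, hjB, rfl⟩
      · exact hg A hA
      · intro a ha
        rcases mem_insert.1 ha with rfl | ha
        · have := hg B hB hjB
          rw [mem_range] at this ⊢
          omega
        · exact hg B hB (mem_of_mem_erase ha)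
    have hs' : ∀ A ∈ 𝓒 {i} {j} 𝒜, #A = r := by
      have := Set.Sized.uvCompression (𝒜 := 𝒜) (u := ({i} : Finset ℕ)) (v := {j})
        (by simp) (fun A hA => hs A hA)
      exact fun A hA => this hA
    have h2' : Inter2 (𝓒 {i} {j} 𝒜) := Inter2.compression hij.ne h2
    obtain ⟨ℬ, e1, e2, e3, e4, e5, e6⟩ := exists_shifted (𝓒 {i} {j} 𝒜) hg' hs' h2'
    refine ⟨ℬ, ?_, ?_, e3, e4, e5, e6⟩
    · rw [e1, card_compression]
    · refine e2.trans (card_shadow_compression_le _ _ fun x hx => ?_)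
      refine ⟨j, mem_singleton_self _, ?_⟩
      have hx' : x = i := mem_singleton.1 hx
      subst hx'
      simp only [erase_singleton]
      exact isCompressed_self _ _
termination_by famMeasure 𝒜
decreasing_by exact hlt

/-- Relative local LYM: double counting. -/
lemma rel_local_lym {G : Finset ℕ} {𝒜 : Fam} {r : ℕ}
    (hr : 1 ≤ r) (hg : ∀ A ∈ 𝒜, A ⊆ G) (hs : ∀ A ∈ 𝒜, #A = r) :
    𝒜.card * r ≤ #(∂ 𝒜) * (#G + 1 - r) := by
  classical
  rcases 𝒜.eq_empty_or_nonempty with rfl | ⟨A₀, hA₀⟩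
  · simp
  set P : Finset (Finset ℕ × Finset ℕ) := (∂ 𝒜 ×ˢ 𝒜).filter (fun p => p.1 ⊆ p.2) with hP
  -- lower bound on #P
  have hlow : #𝒜 * r ≤ #P := by
    have hfib : #P = ∑ A ∈ 𝒜, #(P.filter (fun p => p.2 = A)) := by
      apply card_eq_sum_card_fiberwise
      intro p hp
      exact (mem_product.1 (mem_filter.1 hp).1).2
    rw [hfib]
    rw [← smul_eq_mul, ← sum_const]
    apply sum_le_sum
    intro A hA
    have himg : A.image (fun a => (A.erase a, A)) ⊆ P.filter (fun p => p.2 = A) := by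
      intro p hp
      obtain ⟨a, ha, rfl⟩ := mem_image.1 hp
      refine mem_filter.2 ⟨mem_filter.2 ⟨mem_product.2 ⟨erase_mem_shadow hA ha, hA⟩,
        erase_subset _ _⟩, rfl⟩
    refine le_trans ?_ (card_le_card himg)
    rw [card_image_of_injOn, hs A hA]
    intro a ha b hb hab
    have : A.erase a = A.erase b := congrArg Prod.fst hab
    by_contra hne
    have hmem : a ∈ A.erase b := mem_erase.2 ⟨hne, ha⟩
    rw [← this] at hmem
    exact (mem_erase.1 hmem).1 rfl
  -- upper bound on #P
  have hup : #P ≤ #(∂ 𝒜) * (#G + 1 - r) := by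
    have hfib : #P = ∑ S ∈ ∂ 𝒜, #(P.filter (fun p => p.1 = S)) := by
      apply card_eq_sum_card_fiberwise
      intro p hp
      exact (mem_product.1 (mem_filter.1 hp).1).1
    rw [hfib]
    refine le_trans (sum_le_card_nsmul _ _ (#G + 1 - r) ?_) (by rw [smul_eq_mul])
    intro S hS
    obtain ⟨A₁, hA₁, a₁, ha₁, hSdef⟩ := mem_shadow_iff.1 hS
    have hScard : #S = r - 1 := by rw [← hSdef, card_erase_of_mem ha₁, hs _ hA₁]
    have hSG : S ⊆ G := by rw [← hSdef]; exact (erase_subset _ _).trans (hg _ hA₁)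
    have key : ∀ p ∈ P.filter (fun p => p.1 = S), (p.2 \ S).Nonempty ∧ #(p.2 \ S) = 1
        ∧ p.2 ∈ 𝒜 ∧ S ⊆ p.2 := by
      intro p hp
      have h1 := mem_filter.1 hp
      have h2 := mem_filter.1 h1.1
      have hp2 : p.2 ∈ 𝒜 := (mem_product.1 h2.1).2
      have hsub : S ⊆ p.2 := h1.2 ▸ h2.2
      have hc : #(p.2 \ S) = 1 := by
        rw [card_sdiff_of_subset hsub, hs _ hp2, hScard]; omega
      refine ⟨?_, hc, hp2, hsub⟩
      rw [← card_pos, hc]; omega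
    have hle : #(P.filter (fun p => p.1 = S)) ≤ #(G \ S) := by
      apply card_le_card_of_injOn
        (fun p => if h : (p.2 \ S).Nonempty then (p.2 \ S).min' h else 0)
      · intro p hp
        obtain ⟨hne, hc, hp2, hsub⟩ := key p hp
        simp only [mem_coe]
        rw [dif_pos hne]
        have hm := (p.2 \ S).min'_mem hne
        rw [mem_sdiff] at hm ⊢
        exact ⟨hg _ hp2 hm.1, hm.2⟩
      · intro p hp q hq heq
        rw [mem_coe] at hp hq
        obtain ⟨hnep, hcp, hp2, hsubp⟩ := key p hp
        obtain ⟨hneq, hcq, hq2, hsubq⟩ := key q hq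
        simp only [dif_pos hnep, dif_pos hneq] at heq
        have e1 : p.2 \ S = {(p.2 \ S).min' hnep} :=
          eq_singleton_iff_unique_mem.2 ⟨(p.2 \ S).min'_mem hnep,
            fun x hx => card_le_one.1 hcp.le x hx _ ((p.2 \ S).min'_mem hnep)⟩
        have e2 : q.2 \ S = {(q.2 \ S).min' hneq} :=
          eq_singleton_iff_unique_mem.2 ⟨(q.2 \ S).min'_mem hneq,
            fun x hx => card_le_one.1 hcq.le x hx _ ((q.2 \ S).min'_mem hneq)⟩
        have hp1 : p.1 = S := (mem_filter.1 hp).2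
        have hq1 : q.1 = S := (mem_filter.1 hq).2
        have : p.2 = q.2 := by
          have up : p.2 = S ∪ (p.2 \ S) := by rw [union_sdiff_of_subset hsubp]
          have uq : q.2 = S ∪ (q.2 \ S) := by rw [union_sdiff_of_subset hsubq]
          rw [up, uq, e1, e2, heq]
        exact Prod.ext (hp1.trans hq1.symm) this
    refine hle.trans ?_
    rw [card_sdiff_of_subset hSG, hScard]
    have : r - 1 ≤ #G := hScard ▸ card_le_card hSG
    omega
  calc #𝒜 * r ≤ #P := hlow
    _ ≤ #(∂ 𝒜) * (#G + 1 - r) := hup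

lemma shifted_two_le {k : ℕ} {𝒜 : Fam} (hsh : Shifted 𝒜) (hs : ∀ A ∈ 𝒜, #A = k)
    (h2 : Inter2 𝒜) : ∀ A ∈ 𝒜, ∀ B ∈ 𝒜, 2 ≤ #((A ∩ B) ∩ range (2 * k - 2)) := by
  suffices H : ∀ d : ℕ, ∀ A B : Finset ℕ, A ∈ 𝒜 → B ∈ 𝒜 →
      #((A ∩ B) \ range (2 * k - 2)) = d → 2 ≤ #((A ∩ B) ∩ range (2 * k - 2)) from
    fun A hA B hB => H _ A B hA hB rfl
  intro d
  induction d with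
  | zero =>
    intro A B hA hB hd
    have hsub : A ∩ B ⊆ range (2 * k - 2) :=
      sdiff_eq_empty_iff_subset.1 (card_eq_zero.1 hd)
    rw [inter_eq_left.2 hsub]
    exact h2 A hA B hB
  | succ d ihd =>
    intro A B hA hB hd
    have hne : ((A ∩ B) \ range (2 * k - 2)).Nonempty := by
      rw [← card_pos, hd]; omega
    obtain ⟨x, hx⟩ := hne
    rw [mem_sdiff] at hx
    obtain ⟨hxAB, hxR⟩ := hx
    have hxA : x ∈ A := (mem_inter.1 hxAB).1
    have hxB : x ∈ B := (mem_inter.1 hxAB).2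
    have h2AB : 2 ≤ #(A ∩ B) := h2 A hA B hB
    have hcard : #(A ∪ B) + #(A ∩ B) = #A + #B := card_union_add_card_inter A B
    have hAB : #(A ∪ B) ≤ 2 * k - 2 := by
      have h1 := hs A hA
      have h2' := hs B hB
      have hk : 2 ≤ k := by
        have := card_le_card (inter_subset_left : A ∩ B ⊆ A)
        omega
      omega
    have hy : (range (2 * k - 2) \ (A ∪ B)).Nonempty := by
      rw [← card_pos]
      by_contra hcon
      push_neg at hcon
      have hre : range (2 * k - 2) ⊆ A ∪ B := by
        rw [← sdiff_eq_empty_iff_subset, ← card_eq_zero]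
        omega
      have : insert x (range (2 * k - 2)) ⊆ A ∪ B :=
        insert_subset (mem_union_left _ hxA) hre
      have hcc := card_le_card this
      rw [card_insert_of_notMem hxR, card_range] at hcc
      omega
    obtain ⟨y, hy⟩ := hy
    rw [mem_sdiff] at hy
    obtain ⟨hyR, hyAB⟩ := hy
    have hyA : y ∉ A := fun h => hyAB (mem_union_left _ h)
    have hyB : y ∉ B := fun h => hyAB (mem_union_right _ h)
    have hyx : y < x := by
      rw [mem_range] at hyR
      rw [mem_range] at hxR
      omega
    have hA' : insert y (A.erase x) ∈ 𝒜 := shift_mem hsh hA hyx hyA hxA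
    have hAB' : (insert y (A.erase x)) ∩ B = (A ∩ B).erase x := by
      ext a
      simp only [mem_inter, mem_insert, mem_erase]
      constructor
      · rintro ⟨rfl | ⟨hax, haA⟩, haB⟩
        · exact absurd haB hyB
        · exact ⟨hax, haA, haB⟩
      · rintro ⟨hax, haA, haB⟩
        exact ⟨Or.inr ⟨hax, haA⟩, haB⟩
    have hd' : #(((insert y (A.erase x)) ∩ B) \ range (2 * k - 2)) = d := by
      rw [hAB']
      have : ((A ∩ B).erase x) \ range (2 * k - 2) = ((A ∩ B) \ range (2 * k - 2)).erase x := by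
        rw [erase_sdiff_comm]
      rw [this, card_erase_of_mem (mem_sdiff.2 ⟨hxAB, hxR⟩), hd]
      omega
    have hres := ihd (insert y (A.erase x)) B hA' hB hd'
    rw [hAB'] at hres
    have heq : ((A ∩ B).erase x) ∩ range (2 * k - 2) = (A ∩ B) ∩ range (2 * k - 2) := by
      ext a
      simp only [mem_inter, mem_erase]
      constructor
      · rintro ⟨⟨-, h1⟩, h2⟩; exact ⟨h1, h2⟩
      · rintro ⟨h1, h2⟩
        exact ⟨⟨fun h => hxR (h ▸ h2), h1⟩, h2⟩
    rwa [heq] at hres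

/-- Katona's shadow theorem for 2-intersecting uniform families. -/
theorem katona_shadow : ∀ n : ℕ, ∀ k : ℕ, ∀ 𝒜 : Fam, (∀ A ∈ 𝒜, A ⊆ range n) →
    (∀ A ∈ 𝒜, #A = k) → Inter2 𝒜 → #𝒜 ≤ #(∂ 𝒜) := by
  intro n
  induction n using Nat.strong_induction_on with
  | _ n ih =>
  intro k 𝒜 hg hs h2
  obtain ⟨ℬ, e1, e2, e3, e4, e5, e6⟩ := exists_shifted 𝒜 hg hs h2
  rw [← e1]
  refine le_trans ?_ e2
  -- now prove for the shifted family ℬ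
  rcases ℬ.eq_empty_or_nonempty with rfl | ⟨A₀, hA₀⟩
  · simp
  have hk2 : 2 ≤ k := by
    have := e5 A₀ hA₀ A₀ hA₀
    rw [inter_self] at this
    rw [← e4 A₀ hA₀]
    exact this
  by_cases hnk : n < 2 * k
  · -- local LYM case
    have hlym := rel_local_lym (G := range n) (r := k) (by omega) e3 e4
    rw [card_range] at hlym
    have hmono : #ℬ * k ≤ #(∂ ℬ) * k := by
      refine hlym.trans (Nat.mul_le_mul_left _ (by omega))
    exact Nat.le_of_mul_le_mul_right hmono (by omega)
  · -- induction case: split on x = n - 1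
    push_neg at hnk
    have hn1 : 1 ≤ n := by omega
    set x := n - 1 with hxdef
    set 𝒜₀ := ℬ.filter (fun A => x ∉ A) with h𝒜₀
    set ℬ₁ := ℬ.filter (fun A => x ∈ A) with hℬ₁
    set 𝒜₁ := ℬ₁.image (fun A => A.erase x) with h𝒜₁
    have hsplit : #𝒜₀ + #ℬ₁ = #ℬ := by
      rw [h𝒜₀, hℬ₁, add_comm]
      exact card_filter_add_card_filter_not (fun A => x ∈ A)
    have himg : #𝒜₁ = #ℬ₁ := by
      rw [h𝒜₁]
      apply card_image_of_injOn
      intro A hA B hB hAB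
      rw [mem_coe, hℬ₁, mem_filter] at hA hB
      dsimp only at hAB
      rw [← insert_erase hA.2, hAB, insert_erase hB.2]
    have hmemℬ₁ : ∀ A ∈ ℬ₁, A ∈ ℬ ∧ x ∈ A := fun A hA => mem_filter.1 hA
    have hxlt : 2 * k - 2 ≤ x := by omega
    -- 𝒜₀ facts
    have hg₀ : ∀ A ∈ 𝒜₀, A ⊆ range x := by
      intro A hA
      rw [h𝒜₀, mem_filter] at hA
      intro a ha
      have h1 := e3 A hA.1 ha
      rw [mem_range] at h1 ⊢
      have : a ≠ x := fun h => hA.2 (h ▸ ha)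
      omega
    have hs₀ : ∀ A ∈ 𝒜₀, #A = k := fun A hA => e4 A (mem_of_mem_filter A hA)
    have h2₀ : Inter2 𝒜₀ := fun X hX Y hY =>
      e5 X (mem_of_mem_filter X hX) Y (mem_of_mem_filter Y hY)
    have IH₀ : #𝒜₀ ≤ #(∂ 𝒜₀) := ih x (by omega) k 𝒜₀ hg₀ hs₀ h2₀
    -- 𝒜₁ facts
    have hg₁ : ∀ A ∈ 𝒜₁, A ⊆ range x := by
      intro A' hA'
      rw [h𝒜₁, mem_image] at hA'
      obtain ⟨A, hA, rfl⟩ := hA'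
      intro a ha
      rw [mem_erase] at ha
      have h1 := e3 A (hmemℬ₁ A hA).1 ha.2
      rw [mem_range] at h1 ⊢
      have := ha.1
      omega
    have hs₁ : ∀ A ∈ 𝒜₁, #A = k - 1 := by
      intro A' hA'
      rw [h𝒜₁, mem_image] at hA'
      obtain ⟨A, hA, rfl⟩ := hA'
      rw [card_erase_of_mem (hmemℬ₁ A hA).2, e4 A (hmemℬ₁ A hA).1]
    have h2₁ : Inter2 𝒜₁ := by
      intro X' hX' Y' hY'
      rw [h𝒜₁, mem_image] at hX' hY'
      obtain ⟨A, hA, rfl⟩ := hX'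
      obtain ⟨B, hB, rfl⟩ := hY'
      have key := shifted_two_le e6 e4 e5 A (hmemℬ₁ A hA).1 B (hmemℬ₁ B hB).1
      refine le_trans key (card_le_card ?_)
      intro a ha
      rw [mem_inter] at ha
      obtain ⟨haAB, haR⟩ := ha
      rw [mem_inter] at haAB
      rw [mem_range] at haR
      have hax : a ≠ x := by omega
      rw [mem_inter, mem_erase, mem_erase]
      exact ⟨⟨hax, haAB.1⟩, ⟨hax, haAB.2⟩⟩
    have IH₁ : #𝒜₁ ≤ #(∂ 𝒜₁) := ih x (by omega) (k - 1) 𝒜₁ hg₁ hs₁ h2₁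
    -- shadow assembly
    have hx₁ : ∀ S ∈ ∂ 𝒜₁, x ∉ S := by
      intro S hS hxS
      obtain ⟨A', hA', b, hb, rfl⟩ := mem_shadow_iff.1 hS
      rw [h𝒜₁, mem_image] at hA'
      obtain ⟨A, hA, rfl⟩ := hA'
      exact (mem_erase.1 (mem_of_mem_erase hxS)).1 rfl
    have hsh₀ : ∂ 𝒜₀ ⊆ (∂ ℬ).filter (fun S => x ∉ S) := by
      intro S hS
      obtain ⟨A, hA, a, ha, rfl⟩ := mem_shadow_iff.1 hS
      rw [h𝒜₀, mem_filter] at hA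
      refine mem_filter.2 ⟨erase_mem_shadow hA.1 ha, fun hxS => hA.2 (mem_of_mem_erase hxS)⟩
    have hsh₁ : (∂ 𝒜₁).image (insert x) ⊆ (∂ ℬ).filter (fun S => x ∈ S) := by
      intro T hT
      rw [mem_image] at hT
      obtain ⟨S, hS, rfl⟩ := hT
      obtain ⟨A', hA', b, hb, rfl⟩ := mem_shadow_iff.1 hS
      rw [h𝒜₁, mem_image] at hA'
      obtain ⟨A, hA, rfl⟩ := hA'
      have hxA : x ∈ A := (hmemℬ₁ A hA).2
      have hbx : b ≠ x := (mem_erase.1 hb).1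
      have hbA : b ∈ A := mem_of_mem_erase hb
      have hcomm : (A.erase x).erase b = (A.erase b).erase x := erase_right_comm
      have hxAb : x ∈ A.erase b := mem_erase.2 ⟨fun h => hbx h.symm, hxA⟩
      rw [hcomm, insert_erase hxAb]
      exact mem_filter.2 ⟨erase_mem_shadow (hmemℬ₁ A hA).1 hbA, mem_erase.2
        ⟨fun h => hbx h.symm, hxA⟩⟩
    have him : #((∂ 𝒜₁).image (insert x)) = #(∂ 𝒜₁) := by
      apply card_image_of_injOn
      intro S hS T hT hST
      rw [mem_coe] at hS hT
      have h1 : x ∉ S := hx₁ S hS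
      have h2' : x ∉ T := hx₁ T hT
      rw [← erase_insert h1, hST, erase_insert h2']
    have hfinal : #(∂ 𝒜₀) + #(∂ 𝒜₁) ≤ #(∂ ℬ) := by
      have d1 := card_le_card hsh₀
      have d2 := card_le_card hsh₁
      rw [him] at d2
      have := card_filter_add_card_filter_not (s := ∂ ℬ) (p := fun S => x ∈ S)
      omega
    omega

variable {n : ℕ} {𝓕 : Fam}

def slc (𝓕 : Fam) (i : ℕ) : Fam := 𝓕.filter (fun X => #X = i)

lemma slc_ground (hg : ∀ X ∈ 𝓕, X ⊆ range n) : ∀ X ∈ slc 𝓕 i, X ⊆ range n :=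
  fun X hX => hg X (mem_of_mem_filter X hX)

lemma slc_sized : ∀ X ∈ slc 𝓕 i, #X = i := fun X hX => (mem_filter.1 hX).2

lemma slc_inter2 (h2 : Inter2 𝓕) : Inter2 (slc 𝓕 i) :=
  fun X hX Y hY => h2 X (mem_of_mem_filter X hX) Y (mem_of_mem_filter Y hY)

lemma card_eq_sum_slc (hg : ∀ X ∈ 𝓕, X ⊆ range n) :
    𝓕.card = ∑ i ∈ range (n + 1), #(slc 𝓕 i) := by
  apply card_eq_sum_card_fiberwise
  intro X hX
  rw [mem_coe, mem_range]
  have := card_le_card (hg X hX)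
  rw [card_range] at this
  omega

lemma slc_zero_one (h2 : Inter2 𝓕) {i : ℕ} (hi : i ≤ 1) : slc 𝓕 i = ∅ := by
  rw [eq_empty_iff_forall_notMem]
  intro X hX
  have h := h2 X (mem_of_mem_filter X hX) X (mem_of_mem_filter X hX)
  rw [inter_self, (mem_filter.1 hX).2] at h
  omega

lemma slc_top_le_one (hg : ∀ X ∈ 𝓕, X ⊆ range n) : #(slc 𝓕 n) ≤ 1 := by
  refine card_le_one.2 fun X hX Y hY => ?_
  have hX' := mem_filter.1 hX
  have hY' := mem_filter.1 hY
  have e1 : X = range n := eq_of_subset_of_card_le (hg X hX'.1) (by rw [hX'.2, card_range])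
  have e2 : Y = range n := eq_of_subset_of_card_le (hg Y hY'.1) (by rw [hY'.2, card_range])
  rw [e1, e2]

/-- The key pairing bound between levels `i` and `n+1-i`. -/
lemma pair_bound (hg : ∀ X ∈ 𝓕, X ⊆ range n) (h2 : Inter2 𝓕) {i : ℕ}
    (hi1 : 1 ≤ i) (hi2 : 2 * i ≤ n) :
    #(slc 𝓕 i) + #(slc 𝓕 (n + 1 - i)) ≤ n.choose (i - 1) := by
  classical
  have hKS : #(slc 𝓕 i) ≤ #(∂ (slc 𝓕 i)) :=
    katona_shadow n i (slc 𝓕 i) (slc_ground hg) slc_sized (slc_inter2 h2)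
  set comps : Fam := (slc 𝓕 (n + 1 - i)).image (fun Y => range n \ Y) with hcomps
  have hcompcard : #comps = #(slc 𝓕 (n + 1 - i)) := by
    rw [hcomps]
    apply card_image_of_injOn
    intro X hX Y hY hXY
    rw [mem_coe] at hX hY
    have h1 : range n ∩ X = X := inter_eq_right.2 (slc_ground hg X hX)
    have h2' : range n ∩ Y = Y := inter_eq_right.2 (slc_ground hg Y hY)
    dsimp only at hXY
    rw [← h1, ← h2', ← sdiff_sdiff_self_left (range n) X, ← sdiff_sdiff_self_left (range n) Y,
      hXY]
  have hsub1 : ∂ (slc 𝓕 i) ⊆ powersetCard (i - 1) (range n) := by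
    intro S hS
    obtain ⟨A, hA, a, ha, rfl⟩ := mem_shadow_iff.1 hS
    rw [mem_powersetCard]
    exact ⟨(erase_subset _ _).trans (slc_ground hg A hA),
      by rw [card_erase_of_mem ha, slc_sized A hA]⟩
  have hsub2 : comps ⊆ powersetCard (i - 1) (range n) := by
    intro S hS
    rw [hcomps, mem_image] at hS
    obtain ⟨Y, hY, rfl⟩ := hS
    rw [mem_powersetCard]
    refine ⟨sdiff_subset, ?_⟩
    rw [card_sdiff_of_subset (slc_ground hg Y hY), card_range, slc_sized Y hY]
    omega
  have hdisj : Disjoint (∂ (slc 𝓕 i)) comps := by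
    rw [disjoint_right]
    intro S hScomp hSsh
    rw [hcomps, mem_image] at hScomp
    obtain ⟨Y, hY, rfl⟩ := hScomp
    obtain ⟨A, hA, a, ha, hSA⟩ := mem_shadow_iff.1 hSsh
    -- A ∩ Y has card ≤ 1, contradiction with Inter2
    have hAY : A ∩ Y ⊆ A \ (range n \ Y) := by
      intro b hb
      rw [mem_inter] at hb
      rw [mem_sdiff, mem_sdiff]
      exact ⟨hb.1, fun hc => hc.2 hb.2⟩
    have hsubS : (range n \ Y) ⊆ A := hSA ▸ erase_subset _ _
    have hcard : #(A \ (range n \ Y)) = 1 := by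
      rw [card_sdiff_of_subset hsubS, slc_sized A hA, ← hSA, card_erase_of_mem ha, slc_sized A hA]
      omega
    have h2' := h2 A (mem_of_mem_filter A hA) Y (mem_of_mem_filter Y hY)
    have := card_le_card hAY
    omega
  have hunion := card_le_card (union_subset hsub1 hsub2)
  rw [card_union_of_disjoint hdisj, card_powersetCard, card_range] at hunion
  omega

/-- Middle level bound via Erdős–Ko–Rado (n = 2t+1). -/
lemma middle_bound (hg : ∀ X ∈ 𝓕, X ⊆ range n) (h2 : Inter2 𝓕) {t : ℕ}
    (ht : 1 ≤ t) (hn : n = 2 * t + 1) :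
    #(slc 𝓕 (t + 1)) ≤ (n - 1).choose (t + 1) := by
  classical
  have hnpos : 0 < n := by omega
  set comps : Fam := (slc 𝓕 (t + 1)).image (fun Y => range n \ Y) with hcomps
  have hcompcard : #comps = #(slc 𝓕 (t + 1)) := by
    rw [hcomps]
    apply card_image_of_injOn
    intro X hX Y hY hXY
    rw [mem_coe] at hX hY
    have h1 : range n ∩ X = X := inter_eq_right.2 (slc_ground hg X hX)
    have h2' : range n ∩ Y = Y := inter_eq_right.2 (slc_ground hg Y hY)
    dsimp only at hXY
    rw [← h1, ← h2', ← sdiff_sdiff_self_left (range n) X, ← sdiff_sdiff_self_left (range n) Y,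
      hXY]
  -- comps members: t-sized subsets of range n, pairwise intersecting
  have hcompsized : ∀ S ∈ comps, #S = t ∧ S ⊆ range n := by
    intro S hS
    rw [hcomps, mem_image] at hS
    obtain ⟨Y, hY, rfl⟩ := hS
    constructor
    · rw [card_sdiff_of_subset (slc_ground hg Y hY), card_range, slc_sized Y hY]
      omega
    · exact sdiff_subset
  have hcompinter : ∀ S ∈ comps, ∀ T ∈ comps, (S ∩ T).Nonempty := by
    intro S hS T hT
    rw [hcomps, mem_image] at hS hT
    obtain ⟨X, hX, rfl⟩ := hS
    obtain ⟨Y, hY, rfl⟩ := hT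
    have e : (range n \ X) ∩ (range n \ Y) = range n \ (X ∪ Y) := by
      ext a
      simp only [mem_inter, mem_sdiff, mem_union]
      tauto
    rw [← card_pos]
    have h2' := h2 X (mem_of_mem_filter X hX) Y (mem_of_mem_filter Y hY)
    have hu : X ∪ Y ⊆ range n := union_subset (slc_ground hg X hX) (slc_ground hg Y hY)
    have hcu : #(X ∪ Y) + #(X ∩ Y) = #X + #Y := card_union_add_card_inter X Y
    rw [e, card_sdiff_of_subset hu, card_range]
    rw [slc_sized X hX, slc_sized Y hY] at hcu
    omega
  -- transfer to Fin n and apply EKR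
  set f : ℕ → Fin n := fun a => ⟨a % n, Nat.mod_lt _ hnpos⟩ with hf
  have hfinj : ∀ a < n, ∀ b < n, f a = f b → a = b := by
    intro a ha b hb hab
    have : a % n = b % n := congrArg Fin.val hab
    rwa [Nat.mod_eq_of_lt ha, Nat.mod_eq_of_lt hb] at this
  set F2 : Finset (Finset (Fin n)) := comps.image (fun S => S.image f) with hF2
  have hmemiff : ∀ S ⊆ range n, ∀ a, a ∈ S → f a ∈ S.image f := by
    intro S hS a ha
    exact mem_image_of_mem f ha
  have hpre : ∀ S ⊆ range n, ∀ a, f a ∈ S.image f → a < n → a ∈ S := by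
    intro S hS a hfa ha
    rw [mem_image] at hfa
    obtain ⟨b, hb, hba⟩ := hfa
    have hbn : b < n := by have := hS hb; rwa [mem_range] at this
    rwa [← hfinj b hbn a ha hba]
  have hF2card : #F2 = #comps := by
    rw [hF2]
    apply card_image_of_injOn
    intro S hS T hT hST
    rw [mem_coe] at hS hT
    have hSg := (hcompsized S hS).2
    have hTg := (hcompsized T hT).2
    dsimp only at hST
    apply Subset.antisymm
    · intro a ha
      have han : a < n := by have := hSg ha; rwa [mem_range] at this
      exact hpre T hTg a (hST ▸ mem_image_of_mem f ha) han
    · intro a ha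
      have han : a < n := by have := hTg ha; rwa [mem_range] at this
      exact hpre S hSg a (hST ▸ mem_image_of_mem f ha) han
  have hF2sized : Set.Sized t (F2 : Set (Finset (Fin n))) := by
    intro S hS
    rw [Finset.mem_coe, hF2, mem_image] at hS
    obtain ⟨T, hT, rfl⟩ := hS
    rw [card_image_of_injOn, (hcompsized T hT).1]
    intro a ha b hb hab
    have hTg := (hcompsized T hT).2
    have h1 : a < n := by have := hTg ha; rwa [mem_range] at this
    have h1' : b < n := by have := hTg hb; rwa [mem_range] at this
    exact hfinj a h1 b h1' hab
  have hF2int : (F2 : Set (Finset (Fin n))).Intersecting := by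
    intro S hS T hT
    rw [Finset.mem_coe, hF2, mem_image] at hS hT
    obtain ⟨X, hX, rfl⟩ := hS
    obtain ⟨Y, hY, rfl⟩ := hT
    obtain ⟨a, ha⟩ := hcompinter X hX Y hY
    rw [mem_inter] at ha
    rw [Finset.disjoint_left]
    push_neg
    exact ⟨f a, mem_image_of_mem f ha.1, mem_image_of_mem f ha.2⟩
  have hEKR := Finset.erdos_ko_rado hF2int hF2sized (by omega)
  have : t - 1 = (n - 1) - (t + 1) := by omega
  rw [this, Nat.choose_symm (by omega)] at hEKR
  omega

lemma sum_choose_half_odd (t : ℕ) :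
    ∑ j ∈ range (t + 1), (2 * t + 1).choose j = 2 ^ (2 * t) := by
  have h1 : ∑ j ∈ Ico 0 (t + 1), (2 * t + 1).choose ((2 * t + 1) - j)
      = ∑ j ∈ Ico ((2 * t + 1) + 1 - (t + 1)) ((2 * t + 1) + 1 - 0), (2 * t + 1).choose j :=
    sum_Ico_reflect _ 0 (by omega)
  have h2 : ∀ j ∈ Ico 0 (t + 1), (2 * t + 1).choose ((2 * t + 1) - j)
      = (2 * t + 1).choose j := by
    intro j hj
    rw [mem_Ico] at hj
    exact Nat.choose_symm (by omega)
  rw [sum_congr rfl h2] at h1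
  have e : (2 * t + 1) + 1 - (t + 1) = t + 1 := by omega
  have e' : (2 * t + 1) + 1 - 0 = 2 * t + 2 := by omega
  rw [e, e'] at h1
  have h1' : ∑ j ∈ Ico 0 (t + 1), (2 * t + 1).choose j
      = ∑ j ∈ Ico (t + 1) (2 * t + 2), (2 * t + 1).choose j := h1
  have hsplit : ∑ j ∈ Ico 0 (t + 1), (2 * t + 1).choose j
      + ∑ j ∈ Ico (t + 1) (2 * t + 2), (2 * t + 1).choose j
      = ∑ j ∈ Ico 0 (2 * t + 2), (2 * t + 1).choose j :=
    sum_Ico_consecutive _ (by omega) (by omega)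
  have htot : ∑ j ∈ range (2 * t + 2), (2 * t + 1).choose j = 2 ^ (2 * t + 1) := by
    have h := Nat.sum_range_choose (2 * t + 1)
    rw [(by omega : 2 * t + 1 + 1 = 2 * t + 2)] at h
    exact h
  have hpow : (2 : ℕ) ^ (2 * t + 1) = 2 * 2 ^ (2 * t) := by
    rw [pow_succ, mul_comm]
  rw [range_eq_Ico] at htot ⊢
  omega

lemma sum_choose_half_even (s : ℕ) (hs : 1 ≤ s) :
    ∑ j ∈ range s, (s + s).choose j + (s + s - 1).choose (s - 1) = 2 ^ (s + s - 1) := by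
  have h1 : ∑ j ∈ Ico 0 s, (s + s).choose ((s + s) - j)
      = ∑ j ∈ Ico ((s + s) + 1 - s) ((s + s) + 1 - 0), (s + s).choose j :=
    sum_Ico_reflect _ 0 (by omega)
  have h2 : ∀ j ∈ Ico 0 s, (s + s).choose ((s + s) - j) = (s + s).choose j := by
    intro j hj
    rw [mem_Ico] at hj
    exact Nat.choose_symm (by omega)
  rw [sum_congr rfl h2] at h1
  have e : (s + s) + 1 - s = s + 1 := by omega
  have e' : (s + s) + 1 - 0 = s + s + 1 := by omega
  rw [e, e'] at h1
  have h1' : ∑ j ∈ Ico 0 s, (s + s).choose j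
      = ∑ j ∈ Ico (s + 1) (s + s + 1), (s + s).choose j := h1
  have hsplit1 : ∑ j ∈ Ico 0 s, (s + s).choose j + ∑ j ∈ Ico s (s + 1), (s + s).choose j
      = ∑ j ∈ Ico 0 (s + 1), (s + s).choose j := sum_Ico_consecutive _ (by omega) (by omega)
  have hsplit2 : ∑ j ∈ Ico 0 (s + 1), (s + s).choose j
      + ∑ j ∈ Ico (s + 1) (s + s + 1), (s + s).choose j
      = ∑ j ∈ Ico 0 (s + s + 1), (s + s).choose j := sum_Ico_consecutive _ (by omega) (by omega)
  have hImid : Ico s (s + 1) = {s} := by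
    ext j
    simp only [mem_Ico, mem_singleton]
    omega
  have hmid : ∑ j ∈ Ico s (s + 1), (s + s).choose j = (s + s).choose s := by
    rw [hImid, sum_singleton]
  have hpascal : (s + s).choose s = (s + s - 1).choose (s - 1) + (s + s - 1).choose s := by
    have ha : s + s = (s + s - 1) + 1 := by omega
    have hb : s = (s - 1) + 1 := by omega
    calc (s + s).choose s = ((s + s - 1) + 1).choose ((s - 1) + 1) := by rw [← ha, ← hb]
      _ = (s + s - 1).choose (s - 1) + (s + s - 1).choose ((s - 1) + 1) :=
          Nat.choose_succ_succ' _ _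
      _ = (s + s - 1).choose (s - 1) + (s + s - 1).choose s := by rw [← hb]
  have hsymm : (s + s - 1).choose s = (s + s - 1).choose (s - 1) := by
    have hx : s - 1 = (s + s - 1) - s := by omega
    rw [hx]
    exact (Nat.choose_symm (by omega)).symm
  have htot : ∑ j ∈ range (s + s + 1), (s + s).choose j = 2 ^ (s + s) :=
    Nat.sum_range_choose (s + s)
  have hone : 1 ≤ (s+s).choose s := Nat.choose_pos (by omega)
  have hpow : (2 : ℕ) ^ (s + s) = 2 * 2 ^ (s + s - 1) := by
    have hx : s + s = (s + s - 1) + 1 := by omega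
    calc (2 : ℕ) ^ (s + s) = 2 ^ ((s + s - 1) + 1) := by rw [← hx]
      _ = 2 ^ (s + s - 1) * 2 := pow_succ _ _
      _ = 2 * 2 ^ (s + s - 1) := mul_comm _ _
  rw [range_eq_Ico] at htot ⊢
  omega

/-- Katona's intersection theorem for 2-intersecting families. -/
theorem katona2 (n : ℕ) (𝓕 : Fam) (hg : ∀ X ∈ 𝓕, X ⊆ range n) (h2 : Inter2 𝓕) :
    𝓕.card + (n - 1).choose ((n - 1) / 2) ≤ 2 ^ (n - 1) := by
  rcases Nat.lt_or_ge n 2 with hn | hn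
  · have h𝓕 : 𝓕 = ∅ := by
      rw [eq_empty_iff_forall_notMem]
      intro X hX
      have h := h2 X hX X hX
      rw [inter_self] at h
      have := card_le_card (hg X hX)
      rw [card_range] at this
      omega
    subst h𝓕
    simp only [card_empty, zero_add]
    interval_cases n <;> simp
  have hsum := card_eq_sum_slc hg
  rw [range_eq_Ico] at hsum
  have ha0 : #(slc 𝓕 0) = 0 := by rw [slc_zero_one h2 (by omega), card_empty]
  have hI01 : Ico 0 1 = ({0} : Finset ℕ) := by
    ext j
    simp only [mem_Ico, mem_singleton]
    omega
  rcases Nat.even_or_odd n with ⟨s, hseq⟩ | ⟨t, hteq⟩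
  · -- even case
    subst hseq
    have hs1 : 1 ≤ s := by omega
    have hsplit1 : ∑ i ∈ Ico 0 1, #(slc 𝓕 i) + ∑ i ∈ Ico 1 (s + 1), #(slc 𝓕 i)
        = ∑ i ∈ Ico 0 (s + 1), #(slc 𝓕 i) := sum_Ico_consecutive _ (by omega) (by omega)
    have hsplit2 : ∑ i ∈ Ico 0 (s + 1), #(slc 𝓕 i) + ∑ i ∈ Ico (s + 1) (s + s + 1), #(slc 𝓕 i)
        = ∑ i ∈ Ico 0 (s + s + 1), #(slc 𝓕 i) := sum_Ico_consecutive _ (by omega) (by omega)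
    have hrefl : ∑ i ∈ Ico 1 (s + 1), #(slc 𝓕 ((s + s + 1) - i))
        = ∑ i ∈ Ico (s + 1) (s + s + 1), #(slc 𝓕 i) := by
      have h1 : ∑ i ∈ Ico 1 (s + 1), #(slc 𝓕 ((s + s + 1) - i))
          = ∑ i ∈ Ico ((s + s + 1) + 1 - (s + 1)) ((s + s + 1) + 1 - 1), #(slc 𝓕 i) :=
        sum_Ico_reflect (fun j => #(slc 𝓕 j)) 1 (m := s + 1) (n := s + s + 1) (by omega)
      have e : (s + s + 1) + 1 - (s + 1) = s + 1 := by omega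
      have e' : (s + s + 1) + 1 - 1 = s + s + 1 := by omega
      rw [e, e'] at h1
      exact h1
    have hpair : ∑ i ∈ Ico 1 (s + 1), (#(slc 𝓕 i) + #(slc 𝓕 (s + s + 1 - i)))
        ≤ ∑ i ∈ Ico 1 (s + 1), (s + s).choose (i - 1) := by
      apply sum_le_sum
      intro i hi
      rw [mem_Ico] at hi
      exact pair_bound hg h2 (by omega) (by omega)
    have hchoose : ∑ i ∈ Ico 1 (s + 1), (s + s).choose (i - 1) = ∑ j ∈ range s, (s + s).choose j := by
      rw [sum_Ico_eq_sum_range]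
      have e : s + 1 - 1 = s := by omega
      rw [e]
      apply sum_congr rfl
      intro j hj
      congr 1
      omega
    rw [sum_add_distrib, hrefl] at hpair
    have harith := sum_choose_half_even s hs1
    have hd2 : (s + s - 1) / 2 = s - 1 := by omega
    rw [hd2]
    have hsum01 : ∑ i ∈ Ico 0 1, #(slc 𝓕 i) = 0 := by
      rw [hI01, sum_singleton, ha0]
    omega
  · -- odd case
    subst hteq
    have ht1 : 1 ≤ t := by omega
    have hsplit0 : ∑ i ∈ Ico 0 1, #(slc 𝓕 i) + ∑ i ∈ Ico 1 (t + 1), #(slc 𝓕 i)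
        = ∑ i ∈ Ico 0 (t + 1), #(slc 𝓕 i) := sum_Ico_consecutive _ (by omega) (by omega)
    have hsplit1 : ∑ i ∈ Ico 0 (t + 1), #(slc 𝓕 i) + ∑ i ∈ Ico (t + 1) (t + 2), #(slc 𝓕 i)
        = ∑ i ∈ Ico 0 (t + 2), #(slc 𝓕 i) := sum_Ico_consecutive _ (by omega) (by omega)
    have hsplit2 : ∑ i ∈ Ico 0 (t + 2), #(slc 𝓕 i) + ∑ i ∈ Ico (t + 2) (2 * t + 1 + 1), #(slc 𝓕 i)
        = ∑ i ∈ Ico 0 (2 * t + 1 + 1), #(slc 𝓕 i) := sum_Ico_consecutive _ (by omega) (by omega)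
    have hImid : Ico (t + 1) (t + 2) = ({t + 1} : Finset ℕ) := by
      ext j
      simp only [mem_Ico, mem_singleton]
      omega
    have hmid : ∑ i ∈ Ico (t + 1) (t + 2), #(slc 𝓕 i) = #(slc 𝓕 (t + 1)) := by
      rw [hImid, sum_singleton]
    have hrefl : ∑ i ∈ Ico 1 (t + 1), #(slc 𝓕 ((2 * t + 1 + 1) - i))
        = ∑ i ∈ Ico (t + 2) (2 * t + 1 + 1), #(slc 𝓕 i) := by
      have h1 : ∑ i ∈ Ico 1 (t + 1), #(slc 𝓕 ((2 * t + 1 + 1) - i))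
          = ∑ i ∈ Ico ((2 * t + 1 + 1) + 1 - (t + 1)) ((2 * t + 1 + 1) + 1 - 1), #(slc 𝓕 i) :=
        sum_Ico_reflect (fun j => #(slc 𝓕 j)) 1 (m := t + 1) (n := 2 * t + 1 + 1) (by omega)
      have e : (2 * t + 1 + 1) + 1 - (t + 1) = t + 2 := by omega
      have e' : (2 * t + 1 + 1) + 1 - 1 = 2 * t + 1 + 1 := by omega
      rw [e, e'] at h1
      exact h1
    have hpair : ∑ i ∈ Ico 1 (t + 1), (#(slc 𝓕 i) + #(slc 𝓕 (2 * t + 1 + 1 - i)))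
        ≤ ∑ i ∈ Ico 1 (t + 1), (2 * t + 1).choose (i - 1) := by
      apply sum_le_sum
      intro i hi
      rw [mem_Ico] at hi
      exact pair_bound hg h2 (by omega) (by omega)
    have hchoose : ∑ i ∈ Ico 1 (t + 1), (2 * t + 1).choose (i - 1) = ∑ j ∈ range t, (2 * t + 1).choose j := by
      rw [sum_Ico_eq_sum_range]
      have e : t + 1 - 1 = t := by omega
      rw [e]
      apply sum_congr rfl
      intro j hj
      congr 1
      omega
    rw [sum_add_distrib, hrefl] at hpair
    have hmidb : #(slc 𝓕 (t + 1)) ≤ (2 * t).choose (t + 1) := by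
      have h := middle_bound hg h2 ht1 rfl
      rwa [(by omega : 2 * t + 1 - 1 = 2 * t)] at h
    have hp1 : (2 * t).choose t + (2 * t).choose (t + 1) = (2 * t + 1).choose (t + 1) :=
      (Nat.choose_succ_succ' (2 * t) t).symm
    have hp2 : (2 * t + 1).choose (t + 1) = (2 * t + 1).choose t := by
      have h := Nat.choose_symm (n := 2 * t + 1) (k := t + 1) (by omega)
      rw [(by omega : 2 * t + 1 - (t + 1) = t)] at h
      exact h.symm
    have hhalf := sum_choose_half_odd t
    have hstep : ∑ j ∈ range (t + 1), (2 * t + 1).choose j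
        = ∑ j ∈ range t, (2 * t + 1).choose j + (2 * t + 1).choose t := sum_range_succ _ _
    have hd2 : (2 * t + 1 - 1) / 2 = t := by omega
    have hn1 : 2 * t + 1 - 1 = 2 * t := by omega
    rw [hd2, hn1]
    have hsum01 : ∑ i ∈ Ico 0 1, #(slc 𝓕 i) = 0 := by
      rw [hI01, sum_singleton, ha0]
    omega


lemma central_split (s : ℕ) (hs : 1 ≤ s) :
    (s + s).choose s = 2 * ((s + s - 1).choose (s - 1)) := by
  have hpascal : (s + s).choose s = (s + s - 1).choose (s - 1) + (s + s - 1).choose s := by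
    have ha : s + s = (s + s - 1) + 1 := by omega
    have hb : s = (s - 1) + 1 := by omega
    calc (s + s).choose s = ((s + s - 1) + 1).choose ((s - 1) + 1) := by rw [← ha, ← hb]
      _ = (s + s - 1).choose (s - 1) + (s + s - 1).choose ((s - 1) + 1) :=
          Nat.choose_succ_succ' _ _
      _ = (s + s - 1).choose (s - 1) + (s + s - 1).choose s := by rw [← hb]
  have hsymm : (s + s - 1).choose s = (s + s - 1).choose (s - 1) := by
    have hx : s - 1 = (s + s - 1) - s := by omega
    rw [hx]
    exact (Nat.choose_symm (by omega)).symm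
  omega


end EFCount

open EFCount

/-- For a single monotonic valuation `u` on `m` items, the number of bundles `A ⊆ M` such
that both `A` and `M \ A` are EF1 is at least `C(m, m/2)` for even `m` and at least
`2·C(m-1, (m-1)/2)` for odd `m`. -/
theorem EF1_partitions_count {α : Type*} [DecidableEq α] (M : Finset α)
    (u : Finset α → ℝ) (hu0 : u ∅ = 0)
    (hum : ∀ A B : Finset α, A ⊆ B → u A ≤ u B) :
    (if Even M.card then Nat.choose M.card (M.card / 2)
      else 2 * Nat.choose (M.card - 1) ((M.card - 1) / 2)) ≤
      (M.powerset.filter fun A => EF1 M u A ∧ EF1 M u (M \ A)).card := by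
  classical
  rcases Finset.eq_empty_or_nonempty M with rfl | hMne
  · -- M = ∅
    have hmem : (∅ : Finset α) ∈ (∅ : Finset α).powerset.filter
        (fun A => EF1 ∅ u A ∧ EF1 ∅ u (∅ \ A)) := by
      rw [mem_filter, mem_powerset]
      refine ⟨Subset.refl _, Or.inl (le_of_eq (by rw [Finset.sdiff_empty])), Or.inl ?_⟩
      simp
    have hpos := card_pos.2 ⟨∅, hmem⟩
    rw [Finset.card_empty, if_pos Even.zero]
    simpa using hpos
  set m := M.card with hm
  have hmpos : 0 < m := card_pos.2 hMne
  -- main case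
  set Good := M.powerset.filter fun A => EF1 M u A ∧ EF1 M u (M \ A) with hGood
  set B1 := M.powerset.filter (fun A => ¬ EF1 M u A) with hB1
  set B2 := M.powerset.filter (fun A => ¬ EF1 M u (M \ A)) with hB2
  -- cover
  have hcover : M.powerset ⊆ Good ∪ (B1 ∪ B2) := by
    intro A hA
    by_cases h1 : EF1 M u A
    · by_cases h2 : EF1 M u (M \ A)
      · exact mem_union_left _ (mem_filter.2 ⟨hA, h1, h2⟩)
      · exact mem_union_right _ (mem_union_right _ (mem_filter.2 ⟨hA, h2⟩))
    · exact mem_union_right _ (mem_union_left _ (mem_filter.2 ⟨hA, h1⟩))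
  have hcardcover : 2 ^ m ≤ #Good + (#B1 + #B2) := by
    have h1 := card_le_card hcover
    have h2 := card_union_le Good (B1 ∪ B2)
    have h3 := card_union_le B1 B2
    rw [card_powerset, ← hm] at h1
    omega
  -- B1 = image of B2 under complement
  have hB1B2 : #B1 = #B2 := by
    have himg : B1 = B2.image (fun A => M \ A) := by
      ext X
      simp only [hB1, hB2, mem_filter, mem_image, mem_powerset]
      constructor
      · intro ⟨hXM, hX⟩
        refine ⟨M \ X, ⟨sdiff_subset, ?_⟩, Finset.sdiff_sdiff_eq_self hXM⟩
        rw [Finset.sdiff_sdiff_eq_self hXM]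
        exact hX
      · rintro ⟨A, ⟨hAM, hA⟩, rfl⟩
        exact ⟨sdiff_subset, hA⟩
    rw [himg]
    apply card_image_of_injOn
    intro X hX Y hY hXY
    rw [mem_coe, hB2, mem_filter, mem_powerset] at hX hY
    dsimp only at hXY
    rw [← Finset.sdiff_sdiff_eq_self hX.1, ← Finset.sdiff_sdiff_eq_self hY.1, hXY]
  -- B2 is 2-intersecting
  have hkey : ∀ X ∈ B2, X ⊆ M ∧ u (M \ X) < u X ∧ ∀ j ∈ X, u (M \ X) < u (X.erase j) := by
    intro X hX
    rw [hB2, mem_filter, mem_powerset] at hX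
    obtain ⟨hXM, hX⟩ := hX
    rw [EF1, Finset.sdiff_sdiff_eq_self hXM] at hX
    push_neg at hX
    exact ⟨hXM, hX.1, hX.2⟩
  have h2int : ∀ X ∈ B2, ∀ Y ∈ B2, 2 ≤ #(X ∩ Y) := by
    intro X hX Y hY
    obtain ⟨hXM, hX1, hX2⟩ := hkey X hX
    obtain ⟨hYM, hY1, hY2⟩ := hkey Y hY
    by_contra hc
    push_neg at hc
    interval_cases hint : #(X ∩ Y)
    · -- X ∩ Y = ∅
      have hXY : X ∩ Y = ∅ := card_eq_zero.1 hint
      have hYsub : Y ⊆ M \ X := by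
        intro y hy
        rw [mem_sdiff]
        refine ⟨hYM hy, fun hyX => ?_⟩
        have : y ∈ X ∩ Y := mem_inter.2 ⟨hyX, hy⟩
        rw [hXY] at this
        exact notMem_empty y this
      have hXsub : X ⊆ M \ Y := by
        intro x hx
        rw [mem_sdiff]
        refine ⟨hXM hx, fun hxY => ?_⟩
        have : x ∈ X ∩ Y := mem_inter.2 ⟨hx, hxY⟩
        rw [hXY] at this
        exact notMem_empty x this
      have c1 : u Y ≤ u (M \ X) := hum _ _ hYsub
      have c2 : u X ≤ u (M \ Y) := hum _ _ hXsub
      linarith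
    · -- X ∩ Y = {c}
      obtain ⟨c, hc⟩ := card_eq_one.1 hint
      have hcX : c ∈ X := (mem_inter.1 (hc ▸ mem_singleton_self c)).1
      have hcY : c ∈ Y := (mem_inter.1 (hc ▸ mem_singleton_self c)).2
      have hYsub : Y.erase c ⊆ M \ X := by
        intro y hy
        rw [mem_erase] at hy
        rw [mem_sdiff]
        refine ⟨hYM hy.2, fun hyX => ?_⟩
        have : y ∈ X ∩ Y := mem_inter.2 ⟨hyX, hy.2⟩
        rw [hc, mem_singleton] at this
        exact hy.1 this
      have hXsub : X.erase c ⊆ M \ Y := by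
        intro x hx
        rw [mem_erase] at hx
        rw [mem_sdiff]
        refine ⟨hXM hx.2, fun hxY => ?_⟩
        have : x ∈ X ∩ Y := mem_inter.2 ⟨hx.2, hxY⟩
        rw [hc, mem_singleton] at this
        exact hx.1 this
      have c1 : u (Y.erase c) ≤ u (M \ X) := hum _ _ hYsub
      have c2 : u (X.erase c) ≤ u (M \ Y) := hum _ _ hXsub
      have d1 := hY2 c hcY
      have d2 := hX2 c hcX
      linarith
  -- transfer to ℕ
  set ψ : α → ℕ := fun a => if h : a ∈ M then ((M.equivFin ⟨a, h⟩ : Fin m) : ℕ) else 0 with hψ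
  have hψlt : ∀ a ∈ M, ψ a < m := by
    intro a ha
    rw [hψ]
    dsimp only
    rw [dif_pos ha]
    exact (M.equivFin ⟨a, ha⟩).isLt
  have hψinj : ∀ a ∈ M, ∀ b ∈ M, ψ a = ψ b → a = b := by
    intro a ha b hb hab
    rw [hψ] at hab
    dsimp only at hab
    rw [dif_pos ha, dif_pos hb] at hab
    have h1 : M.equivFin ⟨a, ha⟩ = M.equivFin ⟨b, hb⟩ := Fin.val_injective hab
    have h2 := M.equivFin.injective h1
    exact congrArg Subtype.val h2
  set F : Fam := B2.image (fun X => X.image ψ) with hF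
  have hsubM : ∀ X ∈ B2, X ⊆ M := fun X hX => (hkey X hX).1
  have hFcard : #F = #B2 := by
    rw [hF]
    apply card_image_of_injOn
    intro X hX Y hY hXY
    rw [mem_coe] at hX hY
    dsimp only at hXY
    have hXM := hsubM X hX
    have hYM := hsubM Y hY
    apply Subset.antisymm
    · intro a ha
      have : ψ a ∈ Y.image ψ := hXY ▸ mem_image_of_mem ψ ha
      obtain ⟨b, hb, hba⟩ := mem_image.1 this
      rwa [← hψinj b (hYM hb) a (hXM ha) hba]
    · intro a ha
      have : ψ a ∈ X.image ψ := hXY ▸ mem_image_of_mem ψ ha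
      obtain ⟨b, hb, hba⟩ := mem_image.1 this
      rwa [← hψinj b (hXM hb) a (hYM ha) hba]
  have hFground : ∀ S ∈ F, S ⊆ range m := by
    intro S hS
    rw [hF, mem_image] at hS
    obtain ⟨X, hX, rfl⟩ := hS
    intro a ha
    obtain ⟨b, hb, rfl⟩ := mem_image.1 ha
    rw [mem_range]
    exact hψlt b (hsubM X hX hb)
  have hF2 : Inter2 F := by
    intro S hS T hT
    rw [hF, mem_image] at hS hT
    obtain ⟨X, hX, rfl⟩ := hS
    obtain ⟨Y, hY, rfl⟩ := hT
    have hsub : (X ∩ Y).image ψ ⊆ (X.image ψ) ∩ (Y.image ψ) := by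
      intro a ha
      obtain ⟨b, hb, rfl⟩ := mem_image.1 ha
      rw [mem_inter] at hb
      exact mem_inter.2 ⟨mem_image_of_mem ψ hb.1, mem_image_of_mem ψ hb.2⟩
    have hcd : #((X ∩ Y).image ψ) = #(X ∩ Y) := by
      apply card_image_of_injOn
      intro a ha b hb hab
      rw [mem_coe, mem_inter] at ha hb
      exact hψinj a (hsubM X hX ha.1) b (hsubM X hX hb.1) hab
    have := h2int X hX Y hY
    have := card_le_card hsub
    omega
  have hkat := katona2 m F hFground hF2
  -- final arithmetic
  have hpow : 2 ^ m = 2 * 2 ^ (m - 1) := by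
    have hx : m = (m - 1) + 1 := by omega
    calc (2:ℕ) ^ m = 2 ^ ((m - 1) + 1) := by rw [← hx]
      _ = 2 ^ (m - 1) * 2 := pow_succ _ _
      _ = 2 * 2 ^ (m - 1) := mul_comm _ _
  have hGoodge : 2 * ((m - 1).choose ((m - 1) / 2)) ≤ #Good := by omega
  split_ifs with hev
  · obtain ⟨s, hseq⟩ := hev
    have hs1 : 1 ≤ s := by omega
    have hdiv : m / 2 = s := by omega
    have hdiv2 : (m - 1) / 2 = s - 1 := by omega
    have hsplit := central_split s hs1
    rw [hdiv]
    have hms : m = s + s := hseq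
    rw [hms] at hGoodge hdiv2 ⊢
    rw [hdiv2] at hGoodge
    omega
  · exact hGoodge
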